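/- The coordinate projections P₀ and P₁ are injective on Z. Consequently the assignment T(P₀ z) := P₁ z (for z ∈ Z) defines an injective linear operator T with domain P₀(Z) ⊆ Z₀ and range P₁(Z) ⊆ Z₁; its domain is dense in Z₀, its range is dense in Z₁, and its graph G(T) = {(P₀ z, P₁ z) : z ∈ Z} coincides with Z, hence is closed in H₀ ⊕₂ H₁; in particular T is a closed densely defined operator from Z₀ to Z₁. -/

import Mathlib

open scoped InnerProductSpace

variable {H₀ H₁ : Type*} [NormedAddCommGroup H₀] [InnerProductSpace ℂ H₀] [CompleteSpace H₀]
  [NormedAddCommGroup H₁] [InnerProductSpace ℂ H₁] [CompleteSpace H₁]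

/-- First coordinate projection `H₀ ⊕₂ H₁ → H₀` as a linear map. -/
noncomputable def P0 : WithLp 2 (H₀ × H₁) →ₗ[ℂ] H₀ :=
  (LinearMap.fst ℂ H₀ H₁) ∘ₗ (WithLp.linearEquiv 2 ℂ (H₀ × H₁)).toLinearMap

/-- Second coordinate projection `H₀ ⊕₂ H₁ → H₁` as a linear map. -/
noncomputable def P1 : WithLp 2 (H₀ × H₁) →ₗ[ℂ] H₁ :=
  (LinearMap.snd ℂ H₀ H₁) ∘ₗ (WithLp.linearEquiv 2 ℂ (H₀ × H₁)).toLinearMap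

/-- The graph `G(T) = {(x, T x) : x ∈ dom}` of an operator `T` with domain
`dom ⊆ H₀` and values in `H₁`, as a subspace of `H₀ ⊕₂ H₁`. -/
noncomputable def graphSub (dom : Submodule ℂ H₀) (T : dom →ₗ[ℂ] H₁) :
    Submodule ℂ (WithLp 2 (H₀ × H₁)) :=
  LinearMap.range ((WithLp.linearEquiv 2 ℂ (H₀ × H₁)).symm.toLinearMap ∘ₗ (dom.subtype.prod T))

/-- `P₀` and `P₁` are injective on `Z`, and `T (P₀ z) := P₁ z` defines an injective linear
operator with domain `P₀(Z) ⊆ Z₀`, range `P₁(Z) ⊆ Z₁`, dense domain in `Z₀`, dense range in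
`Z₁`, whose graph coincides with `Z` (viewed in `H₀ ⊕₂ H₁`), hence is closed: `T` is a closed
densely defined operator from `Z₀` to `Z₁`. -/
theorem stmt_7 (Y : Submodule ℂ (WithLp 2 (H₀ × H₁)))
    (hY : IsClosed (Y : Set (WithLp 2 (H₀ × H₁))))
    (A : Y →L[ℂ] Y)
    (hA : ∀ x y : Y,
      ⟪A x, y⟫_ℂ = ⟪P0 (x : WithLp 2 (H₀ × H₁)), P0 (y : WithLp 2 (H₀ × H₁))⟫_ℂ)
    (Y₀ Y₁ Z : Submodule ℂ Y)
    (hY₀ : Y₀ = LinearMap.ker ((1 - A : Y →L[ℂ] Y) : Y →ₗ[ℂ] Y)) (hY₁ : Y₁ = LinearMap.ker (A : Y →ₗ[ℂ] Y))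
    (hZ : Z = (Y₀ ⊔ Y₁)ᗮ)
    (Zx : Submodule ℂ (WithLp 2 (H₀ × H₁))) (hZx : Zx = Submodule.map Y.subtype Z)
    (dom : Submodule ℂ H₀) (hdom : dom = Submodule.map P0 Zx)
    (ran : Submodule ℂ H₁) (hran : ran = Submodule.map P1 Zx)
    (Z₀ : Submodule ℂ H₀) (hZ₀ : Z₀ = (Submodule.map (P0 ∘ₗ Y.subtype) Z).topologicalClosure)
    (Z₁ : Submodule ℂ H₁) (hZ₁ : Z₁ = (Submodule.map (P1 ∘ₗ Y.subtype) Z).topologicalClosure) :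
    Set.InjOn (fun z : Y => P0 (z : WithLp 2 (H₀ × H₁))) (Z : Set Y) ∧
    Set.InjOn (fun z : Y => P1 (z : WithLp 2 (H₀ × H₁))) (Z : Set Y) ∧
    ∃ T : dom →ₗ[ℂ] H₁,
      (∀ z : Y, z ∈ Z → ∀ h : P0 (z : WithLp 2 (H₀ × H₁)) ∈ dom,
        T ⟨P0 (z : WithLp 2 (H₀ × H₁)), h⟩ = P1 (z : WithLp 2 (H₀ × H₁))) ∧
      Function.Injective T ∧
      LinearMap.range T = ran ∧
      dom ≤ Z₀ ∧ dom.topologicalClosure = Z₀ ∧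
      ran ≤ Z₁ ∧ ran.topologicalClosure = Z₁ ∧
      graphSub dom T = Zx ∧
      IsClosed (Zx : Set (WithLp 2 (H₀ × H₁))) := by
  -- inner product on the l2 product
  have hinner : ∀ v w : WithLp 2 (H₀ × H₁),
      ⟪v, w⟫_ℂ = ⟪P0 v, P0 w⟫_ℂ + ⟪P1 v, P1 w⟫_ℂ := fun v w => rfl
  -- kernel characterizations
  have hA0 : ∀ z : Y, P0 (z : WithLp 2 (H₀ × H₁)) = 0 → A z = 0 := by
    intro z hz
    apply ext_inner_right ℂ
    intro y
    rw [hA z y, hz, inner_zero_left, inner_zero_left]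
  have hA1 : ∀ z : Y, P1 (z : WithLp 2 (H₀ × H₁)) = 0 → (1 - A) z = 0 := by
    intro z hz
    apply ext_inner_right ℂ
    intro y
    have : ⟪(1 - A) z, y⟫_ℂ = ⟪z, y⟫_ℂ - ⟪A z, y⟫_ℂ := by
      simp [ContinuousLinearMap.sub_apply, inner_sub_left]
    rw [this, hA z y]
    have h2 : ⟪z, y⟫_ℂ = ⟪(z : WithLp 2 (H₀ × H₁)), (y : WithLp 2 (H₀ × H₁))⟫_ℂ := rfl
    rw [h2, hinner, hz, inner_zero_left, inner_zero_left]
    ring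
  -- z ∈ Z, P0 z = 0 ⟹ z = 0
  have hZker0 : ∀ z ∈ Z, P0 (z : WithLp 2 (H₀ × H₁)) = 0 → z = 0 := by
    intro z hzZ hz
    have hz1 : z ∈ Y₀ ⊔ Y₁ := by
      apply Submodule.mem_sup_right
      rw [hY₁, LinearMap.mem_ker]
      exact hA0 z hz
    rw [hZ] at hzZ
    exact inner_self_eq_zero.mp (hzZ z hz1)
  have hZker1 : ∀ z ∈ Z, P1 (z : WithLp 2 (H₀ × H₁)) = 0 → z = 0 := by
    intro z hzZ hz
    have hz1 : z ∈ Y₀ ⊔ Y₁ := by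
      apply Submodule.mem_sup_left
      rw [hY₀, LinearMap.mem_ker]
      exact hA1 z hz
    rw [hZ] at hzZ
    exact inner_self_eq_zero.mp (hzZ z hz1)
  have inj0 : Set.InjOn (fun z : Y => P0 (z : WithLp 2 (H₀ × H₁))) (Z : Set Y) := by
    intro a ha b hb hab
    have hsub : P0 ((a - b : Y) : WithLp 2 (H₀ × H₁)) = 0 := by
      push_cast
      simp only [map_sub]
      rw [sub_eq_zero]
      exact hab
    have := hZker0 (a - b) (Z.sub_mem ha hb) hsub
    exact sub_eq_zero.mp this
  have inj1 : Set.InjOn (fun z : Y => P1 (z : WithLp 2 (H₀ × H₁))) (Z : Set Y) := by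
    intro a ha b hb hab
    have hsub : P1 ((a - b : Y) : WithLp 2 (H₀ × H₁)) = 0 := by
      push_cast
      simp only [map_sub]
      rw [sub_eq_zero]
      exact hab
    have := hZker1 (a - b) (Z.sub_mem ha hb) hsub
    exact sub_eq_zero.mp this
  -- kernel facts on Zx
  have hZx0 : ∀ v ∈ Zx, P0 v = 0 → v = 0 := by
    intro v hv h0
    rw [hZx] at hv
    obtain ⟨z, hzZ, rfl⟩ := hv
    have := hZker0 z hzZ h0
    simp [this]
  have hZx1 : ∀ v ∈ Zx, P1 v = 0 → v = 0 := by
    intro v hv h0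
    rw [hZx] at hv
    obtain ⟨z, hzZ, rfl⟩ := hv
    have := hZker1 z hzZ h0
    simp [this]
  refine ⟨inj0, inj1, ?_⟩
  -- construct T
  set f : Zx →ₗ[ℂ] H₀ := P0 ∘ₗ Zx.subtype with hf_def
  have hf : Function.Injective f := by
    rw [← LinearMap.ker_eq_bot]
    rw [LinearMap.ker_eq_bot']
    intro m hm
    have : (m : WithLp 2 (H₀ × H₁)) = 0 := hZx0 m m.2 hm
    exact Subtype.ext this
  have hg : Function.Injective (P1 ∘ₗ Zx.subtype) := by
    rw [← LinearMap.ker_eq_bot, LinearMap.ker_eq_bot']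
    intro m hm
    exact Subtype.ext (hZx1 m m.2 hm)
  have hrangef : LinearMap.range f = dom := by
    rw [hf_def, LinearMap.range_comp, Submodule.range_subtype, hdom]
  let e : Zx ≃ₗ[ℂ] dom :=
    (LinearEquiv.ofInjective f hf).trans (LinearEquiv.ofEq _ _ hrangef)
  have he : ∀ w : Zx, (e w : H₀) = P0 (w : WithLp 2 (H₀ × H₁)) := fun w => rfl
  let T : dom →ₗ[ℂ] H₁ := (P1 ∘ₗ Zx.subtype) ∘ₗ (e.symm : dom →ₗ[ℂ] Zx)
  have hT : ∀ x : dom, T x = P1 ((e.symm x : Zx) : WithLp 2 (H₀ × H₁)) := fun x => rfl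
  have hspec : ∀ z : Y, z ∈ Z → ∀ h : P0 (z : WithLp 2 (H₀ × H₁)) ∈ dom,
      T ⟨P0 (z : WithLp 2 (H₀ × H₁)), h⟩ = P1 (z : WithLp 2 (H₀ × H₁)) := by
    intro z hzZ h
    have hmem : (z : WithLp 2 (H₀ × H₁)) ∈ Zx := by
      rw [hZx]; exact ⟨z, hzZ, rfl⟩
    set w : Zx := ⟨(z : WithLp 2 (H₀ × H₁)), hmem⟩ with hw
    have hew : e w = ⟨P0 (z : WithLp 2 (H₀ × H₁)), h⟩ := Subtype.ext (he w)
    have : e.symm ⟨P0 (z : WithLp 2 (H₀ × H₁)), h⟩ = w := by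
      rw [← hew, LinearEquiv.symm_apply_apply]
    rw [hT, this]
  have hTinj : Function.Injective T := by
    intro a b hab
    exact e.symm.injective (hg hab)
  have hTrange : LinearMap.range T = ran := by
    have : LinearMap.range T = Submodule.map (P1 ∘ₗ Zx.subtype) ⊤ := by
      rw [← Submodule.map_top (f := T)]
      show Submodule.map ((P1 ∘ₗ Zx.subtype) ∘ₗ (e.symm : dom →ₗ[ℂ] Zx)) ⊤ = _
      rw [Submodule.map_comp]
      congr 1
      rw [Submodule.map_top, LinearEquiv.range e.symm]
    rw [this, Submodule.map_top, LinearMap.range_comp, Submodule.range_subtype, hran]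
  have hdomZ : dom = Submodule.map (P0 ∘ₗ Y.subtype) Z := by
    rw [hdom, hZx, ← Submodule.map_comp]
  have hranZ : ran = Submodule.map (P1 ∘ₗ Y.subtype) Z := by
    rw [hran, hZx, ← Submodule.map_comp]
  have hdomcl : dom.topologicalClosure = Z₀ := by rw [hdomZ, hZ₀]
  have hdomle : dom ≤ Z₀ := hdomcl ▸ Submodule.le_topologicalClosure dom
  have hrancl : ran.topologicalClosure = Z₁ := by rw [hranZ, hZ₁]
  have hranle : ran ≤ Z₁ := hrancl ▸ Submodule.le_topologicalClosure ran
  have hgraph : graphSub dom T = Zx := by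
    apply le_antisymm
    · rintro v ⟨x, rfl⟩
      have key : ((WithLp.linearEquiv 2 ℂ (H₀ × H₁)).symm.toLinearMap ∘ₗ
          (dom.subtype.prod T)) x = ((e.symm x : Zx) : WithLp 2 (H₀ × H₁)) := by
        have h1 : (x : H₀) = P0 ((e.symm x : Zx) : WithLp 2 (H₀ × H₁)) := by
          conv_lhs => rw [← e.apply_symm_apply x]
          exact he _
        have h2 : T x = P1 ((e.symm x : Zx) : WithLp 2 (H₀ × H₁)) := hT x
        show (WithLp.linearEquiv 2 ℂ (H₀ × H₁)).symm ((x : H₀), T x) = _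
        rw [h1, h2]
        rfl
      rw [key]
      exact (e.symm x).2
    · intro v hv
      set w : Zx := ⟨v, hv⟩ with hw
      refine ⟨e w, ?_⟩
      have h1 : ((e w : dom) : H₀) = P0 v := he w
      have h2 : T (e w) = P1 v := by
        rw [hT, e.symm_apply_apply]
      show (WithLp.linearEquiv 2 ℂ (H₀ × H₁)).symm (((e w : dom) : H₀), T (e w)) = v
      rw [h1, h2]
      rfl
  have hZclosed : IsClosed (Z : Set Y) := by
    rw [hZ]; exact (Y₀ ⊔ Y₁).isClosed_orthogonal
  have hZxclosed : IsClosed (Zx : Set (WithLp 2 (H₀ × H₁))) := by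
    have hemb := hY.isClosedEmbedding_subtypeVal
    have : (Zx : Set (WithLp 2 (H₀ × H₁))) = ((↑) : Y → WithLp 2 (H₀ × H₁)) '' (Z : Set Y) := by
      rw [hZx]; rfl
    rw [this]
    exact hemb.isClosedMap _ hZclosed
  exact ⟨T, hspec, hTinj, hTrange, hdomle, hdomcl, hranle, hrancl, hgraph, hZxclosed⟩
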